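/- Let n be an odd positive integer and let s, s' be integers with 1 ≤ s < s' ≤ (n − 1)/2. Then the invariant subspaces V_s and V_{s'} are inequivalent: there is no ℂ-linear bijection φ : V_s → V_{s'} satisfying φ(λ_t u) = λ_t(φ(u)) for all t ∈ ZMod n and all u ∈ V_s. -/

import Mathlib

/-- The regular representation of the dihedral quandle `R_n = Quandle.dihedral n`
(`ZMod n` with `x ◃ y = 2y - x`) on functions `ZMod n → ℂ`:
`(λ_t f)(x) = f (2t - x)`. -/
def lam (n : ℕ) (t : ZMod n) (f : ZMod n → ℂ) : ZMod n → ℂ :=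
  fun x => f (2 * t - x)

/-- `ω = exp(2πi/n)`. -/
noncomputable def dihedralOmega (n : ℕ) : ℂ :=
  Complex.exp (2 * Real.pi * Complex.I / n)

/-- The character `f_s : ZMod n → ℂ`, `f_s(x) = ω^{s·x.val}`. -/
noncomputable def chi (n : ℕ) (s : ℤ) : ZMod n → ℂ :=
  fun x => dihedralOmega n ^ (s * (x.val : ℤ))

/-- `V_s`: the `ℂ`-linear span of `{f_s, f_{-s}}` in `ZMod n → ℂ`. -/
noncomputable def Vsub (n : ℕ) (s : ℤ) : Submodule ℂ (ZMod n → ℂ) :=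
  Submodule.span ℂ {chi n s, chi n (-s)}

lemma dihedralOmega_ne_zero (n : ℕ) : dihedralOmega n ≠ 0 := Complex.exp_ne_zero _

lemma zeta_prim {n : ℕ} (hn : 0 < n) : IsPrimitiveRoot (dihedralOmega n) n := by
  simpa [dihedralOmega] using Complex.isPrimitiveRoot_exp n hn.ne'

lemma zeta_zpow_congr {n : ℕ} (hn : 0 < n) {a b : ℤ} (h : ((a : ZMod n) = b)) :
    dihedralOmega n ^ a = dihedralOmega n ^ b := by
  have hd : (n : ℤ) ∣ a - b := by
    rw [ZMod.intCast_eq_intCast_iff] at h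
    exact Int.ModEq.dvd h.symm
  have h1 : dihedralOmega n ^ (a - b) = 1 := ((zeta_prim hn).zpow_eq_one_iff_dvd _).2 hd
  have hne := dihedralOmega_ne_zero n
  calc dihedralOmega n ^ a = dihedralOmega n ^ (a - b) * dihedralOmega n ^ b := by
        rw [← zpow_add₀ hne]; ring_nf
    _ = dihedralOmega n ^ b := by rw [h1, one_mul]

lemma zeta_zpow_ne {n : ℕ} (hn : 0 < n) {a b : ℤ} (h : ¬ ((n:ℤ) ∣ a - b)) :
    dihedralOmega n ^ a ≠ dihedralOmega n ^ b := by
  intro he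
  apply h
  have hne := dihedralOmega_ne_zero n
  have h1 : dihedralOmega n ^ (a - b) = 1 := by
    rw [zpow_sub₀ hne, he, div_self (zpow_ne_zero _ hne)]
  exact ((zeta_prim hn).zpow_eq_one_iff_dvd _).1 h1

lemma chi_apply {n : ℕ} (hn : 0 < n) (s k : ℤ) :
    chi n s ((k : ZMod n)) = dihedralOmega n ^ (s * k) := by
  haveI : NeZero n := ⟨hn.ne'⟩
  apply zeta_zpow_congr hn
  push_cast
  rw [ZMod.natCast_val, ZMod.cast_id]

lemma intCast_val_eq {n : ℕ} [NeZero n] (x : ZMod n) : (((x.val : ℤ)) : ZMod n) = x := by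
  push_cast
  rw [ZMod.natCast_val, ZMod.cast_id]

lemma lam_chi {n : ℕ} (hn : 0 < n) (s k : ℤ) :
    lam n ((k : ZMod n)) (chi n s)
      = fun x => dihedralOmega n ^ (2 * s * k) * chi n (-s) x := by
  haveI : NeZero n := ⟨hn.ne'⟩
  have hne := dihedralOmega_ne_zero n
  funext x
  show chi n s (2 * (k : ZMod n) - x) = _
  have hx : (2 * (k : ZMod n) - x) = (((2 * k - (x.val : ℤ)) : ℤ) : ZMod n) := by
    push_cast [ZMod.natCast_val, ZMod.cast_id]
    ring
  rw [hx, chi_apply hn]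
  show _ = dihedralOmega n ^ (2 * s * k) * dihedralOmega n ^ (-s * (x.val : ℤ))
  rw [← zpow_add₀ hne]
  congr 1
  ring

/-- For odd `n` and `1 ≤ s < s' ≤ (n-1)/2`, the invariant subspaces `V_s` and
`V_{s'}` of the regular representation of `R_n` are inequivalent: there is no
`ℂ`-linear bijection `φ : V_s → V_{s'}` intertwining all the operators `λ_t`. -/
theorem Vs_inequivalent_odd (n : ℕ) (hpos : 0 < n) (hodd : Odd n) (s s' : ℤ)
    (hs : 1 ≤ s) (hss' : s < s') (hs' : s' ≤ ((n : ℤ) - 1) / 2) :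
    ¬ ∃ φ : ↥(Vsub n s) →ₗ[ℂ] ↥(Vsub n s'),
        Function.Bijective φ ∧
        ∀ (t : ZMod n) (u w : ↥(Vsub n s)),
          (w : ZMod n → ℂ) = lam n t ↑u →
          ((φ w : ↥(Vsub n s')) : ZMod n → ℂ) = lam n t ↑(φ u) := by
  rintro ⟨φ, ⟨hinj, -⟩, hint⟩
  haveI : NeZero n := ⟨hpos.ne'⟩
  set ζ := dihedralOmega n with hζdef
  have hζ0 : ζ ≠ 0 := dihedralOmega_ne_zero n
  obtain ⟨m, hm⟩ := hodd
  have hmZ : (n : ℤ) = 2 * m + 1 := by exact_mod_cast hm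
  have hb2 : 2 * s' ≤ (n : ℤ) - 1 := by omega
  -- non-divisibility facts
  have hnd1 : ¬ ((n:ℤ) ∣ 2 * s') := by
    intro hd
    have := Int.le_of_dvd (by omega) hd
    omega
  have hnd2 : ¬ ((n:ℤ) ∣ 2 * s' - 2 * s) := by
    intro hd
    have := Int.le_of_dvd (by omega) hd
    omega
  have hcop : IsCoprime (2:ℤ) (n:ℤ) := ⟨-(m:ℤ), 1, by rw [hmZ]; ring⟩
  have hnd3 : ¬ ((n:ℤ) ∣ 2 * s' + 2 * s) := by
    intro hd
    have hd' : (n:ℤ) ∣ (s' + s) := by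
      have h2 : (n:ℤ) ∣ (s' + s) * 2 := by
        convert hd using 1; ring
      exact hcop.symm.dvd_of_dvd_mul_right h2
    have := Int.le_of_dvd (by omega) hd'
    omega
  -- the elements
  have hmem1 : chi n s ∈ Vsub n s := Submodule.subset_span (by left; rfl)
  have hmem2 : chi n (-s) ∈ Vsub n s := Submodule.subset_span (by right; rfl)
  set u : ↥(Vsub n s) := ⟨chi n s, hmem1⟩ with hu
  set w1 : ↥(Vsub n s) := ⟨chi n (-s), hmem2⟩ with hw1def
  have hw1 : (w1 : ZMod n → ℂ) = lam n 0 ↑u := by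
    have hl := lam_chi hpos (n := n) (s := s) (k := 0)
    simp only [Int.cast_zero, mul_zero, zpow_zero, one_mul] at hl
    show chi n (-s) = lam n 0 (chi n s)
    rw [hl]
  set w2 : ↥(Vsub n s) := (ζ ^ (-(2*s)) : ℂ) • u with hw2def
  have hw2 : (w2 : ZMod n → ℂ) = lam n 1 ↑w1 := by
    have hl := lam_chi hpos (n := n) (s := -s) (k := 1)
    simp only [Int.cast_one, mul_one, neg_neg] at hl
    show (ζ ^ (-(2*s)) : ℂ) • chi n s = lam n 1 (chi n (-s))
    rw [hl]
    funext x
    show ζ ^ (-(2*s)) * chi n s x = ζ ^ (2 * -s) * chi n s x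
    congr 2
    ring
  have h0 := hint 0 u w1 hw1
  have h1 := hint 1 w1 w2 hw2
  have hphiw2 : ((φ w2 : ↥(Vsub n s')) : ZMod n → ℂ)
      = ζ ^ (-(2*s)) • ((φ u : ↥(Vsub n s')) : ZMod n → ℂ) := by
    rw [hw2def, map_smul]
    rfl
  set g : ZMod n → ℂ := ↑(φ u) with hg
  have hrel : ∀ k : ℤ, ζ ^ (-(2*s)) * g ((k : ZMod n)) = g (((k - 2 : ℤ) : ZMod n)) := by
    intro k
    have e := congrFun (hphiw2.symm.trans h1) ((k : ZMod n))
    rw [h0] at e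
    have e2 : lam n 1 (lam n 0 g) ((k : ZMod n)) = g (((k - 2 : ℤ) : ZMod n)) := by
      show g (2*0 - (2*1 - (k : ZMod n))) = _
      congr 1
      push_cast
      ring
    rw [e2] at e
    simpa using e
  obtain ⟨a, b, hab⟩ := Submodule.mem_span_pair.1 (φ u).2
  have geval : ∀ k : ℤ, g ((k : ZMod n)) = a * ζ ^ (s' * k) + b * ζ ^ (-s' * k) := by
    intro k
    rw [hg, ← hab]
    simp [chi_apply hpos, smul_eq_mul]
    rfl
  have E : ∀ k : ℤ, ζ^(-(2*s)) * (a * ζ^(s'*k) + b * ζ^(-s'*k))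
      = a * ζ^(s'*(k-2)) + b * ζ^(-s'*(k-2)) := by
    intro k
    have hh := hrel k
    rw [geval, geval] at hh
    exact hh
  -- set up abbreviations
  set c : ℂ := ζ ^ (s' : ℤ) with hcdef
  set C : ℂ := ζ ^ (2 * s') with hCdef
  set Dinv : ℂ := ζ ^ (2 * s) with hDdef
  have hc0 : c ≠ 0 := zpow_ne_zero _ hζ0
  have hC0 : C ≠ 0 := zpow_ne_zero _ hζ0
  have hD0 : Dinv ≠ 0 := zpow_ne_zero _ hζ0
  have hcc : c * c = C := by rw [hcdef, hCdef, ← zpow_add₀ hζ0]; congr 1; ring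
  have hne1 : C ≠ 1 := by
    rw [hCdef, show (1:ℂ) = ζ ^ (0:ℤ) by simp]
    exact zeta_zpow_ne hpos (by simpa using hnd1)
  have hne2 : C ≠ Dinv := by
    rw [hCdef, hDdef]
    exact zeta_zpow_ne hpos (by simpa using hnd2)
  have hne3 : C * Dinv ≠ 1 := by
    rw [hCdef, hDdef, ← zpow_add₀ hζ0, show (1:ℂ) = ζ ^ (0:ℤ) by simp]
    exact zeta_zpow_ne hpos (by simpa using hnd3)
  have E0 := E 0
  have E1 := E 1
  rw [show s' * (0:ℤ) = 0 by ring, show -s' * (0:ℤ) = 0 by ring,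
    show s' * ((0:ℤ) - 2) = -(2*s') by ring, show -s' * ((0:ℤ) - 2) = 2*s' by ring,
    zpow_zero, show (-(2*s)) = -(2*s) by ring] at E0
  simp only [zpow_neg, ← hCdef, ← hDdef, zpow_zero] at E0
  -- E0 : Dinv⁻¹ * (a * 1 + b * 1) = a * C⁻¹ + b * C
  rw [show s' * (1:ℤ) = s' by ring, show -s' * (1:ℤ) = -s' by ring,
    show s' * ((1:ℤ) - 2) = -s' by ring, show -s' * ((1:ℤ) - 2) = s' by ring] at E1
  simp only [zpow_neg, ← hCdef, ← hDdef, ← hcdef] at E1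
  -- E1 : Dinv⁻¹ * (a * c + b * c⁻¹) = a * c⁻¹ + b * c
  field_simp at E0 E1
  have E1'' : (a * C + b) * c = ((a + b * C) * Dinv) * c := by
    linear_combination c * E1 + (b * Dinv * c - a * c) * hcc
  have E1' : a * C + b = (a + b * C) * Dinv := mul_right_cancel₀ hc0 E1''
  have hbz : b * ((C - 1) * (1 - C * Dinv)) = 0 := by
    linear_combination E0 - E1'
  have hb : b = 0 := by
    rcases mul_eq_zero.1 hbz with h | h
    · exact h
    · rcases mul_eq_zero.1 h with h' | h'
      · exact absurd (sub_eq_zero.1 h') hne1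
      · exact absurd (sub_eq_zero.1 h').symm hne3
  have haz : a * (C - Dinv) = 0 := by
    rw [hb] at E1'
    linear_combination E1'
  have ha : a = 0 := by
    rcases mul_eq_zero.1 haz with h | h
    · exact h
    · exact absurd (sub_eq_zero.1 h) hne2
  have hgz : g = 0 := by
    rw [hg, ← hab, ha, hb]
    simp
  have hphiu : φ u = 0 := Subtype.ext (by rw [← hg, hgz]; rfl)
  have hu0 : u = 0 := hinj (by rw [hphiu, map_zero])
  have hchi : chi n s 0 = 0 := by
    have := congrFun (congrArg Subtype.val hu0) 0
    simpa using this
  have : (1:ℂ) = 0 := by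
    rw [← hchi]
    simp [chi]
  exact one_ne_zero this
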